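/- Let (Ω, ν) be a measure space and let ω ↦ λ_ω be an integrable mapping from Ω to the set Z of null-sequences in l∞(ℤ^d), i.e., a measurable map into l∞(ℤ^d) with ∫_Ω ‖λ_ω‖ dν(ω) < ∞ such that each λ_ω is a null-sequence. Then the sequence λ(n) = ∫_Ω λ_ω(n) dν(ω), n ∈ ℤ^d, is a null-sequence. -/

import Mathlib

open Filter Topology

/-- A Følner sequence in `ℤ^d`. -/
def IsFolner (d : ℕ) (Φ : ℕ → Finset (Fin d → ℤ)) : Prop :=
  (∀ N, (Φ N).Nonempty) ∧
  ∀ v : Fin d → ℤ,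
    Tendsto (fun N => ((symmDiff ((Φ N).image (fun n => v + n)) (Φ N)).card : ℝ) / (Φ N).card)
      atTop (𝓝 0)

/-- A set `S ⊆ ℤ^d` has uniform (Banach) density zero. -/
def UnifDensityZero (d : ℕ) (S : Set (Fin d → ℤ)) : Prop :=
  ∀ Φ : ℕ → Finset (Fin d → ℤ), IsFolner d Φ →
    Tendsto (fun N => ((S ∩ (Φ N : Set (Fin d → ℤ))).ncard : ℝ) / (Φ N).card)
      atTop (𝓝 0)

/-- A bounded sequence `ℤ^d → ℂ` tending to zero in uniform density: a null-sequence. -/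
def IsNullSeq (d : ℕ) (lam : (Fin d → ℤ) → ℂ) : Prop :=
  (∃ C, ∀ n, ‖lam n‖ ≤ C) ∧
  ∀ ε > 0, UnifDensityZero d {n | ε ≤ ‖lam n‖}

lemma ncard_inter_eq (S : Set α) (Φ : Finset α) [DecidablePred (· ∈ S)] :
    (S ∩ (Φ : Set α)).ncard = (Φ.filter (· ∈ S)).card := by
  rw [← Set.ncard_coe_finset]
  congr 1
  ext n
  simp [Finset.mem_filter, and_comm]

lemma cesaro {d : ℕ} {lam : (Fin d → ℤ) → ℂ} (h : IsNullSeq d lam)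
    {Φ : ℕ → Finset (Fin d → ℤ)} (hΦ : IsFolner d Φ) :
    Tendsto (fun N => (∑ n ∈ Φ N, ‖lam n‖) / (Φ N).card) atTop (𝓝 0) := by
  classical
  obtain ⟨⟨C, hC⟩, hdens⟩ := h
  set C' := max C 1 with hC'
  have hC'pos : (0:ℝ) < C' := lt_of_lt_of_le one_pos (le_max_right _ _)
  have hC'le : ∀ n, ‖lam n‖ ≤ C' := fun n => (hC n).trans (le_max_left _ _)
  rw [NormedAddCommGroup.tendsto_nhds_zero]
  intro ε hε
  have hε2 : (0:ℝ) < ε / 2 := by positivity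
  have hd := hdens (ε/2) hε2 Φ hΦ
  rw [NormedAddCommGroup.tendsto_nhds_zero] at hd
  filter_upwards [hd (ε / (2 * C')) (by positivity)] with N hN
  set S := {n | ε/2 ≤ ‖lam n‖}
  have hcard : (0:ℝ) < (Φ N).card := by
    exact_mod_cast Finset.card_pos.2 (hΦ.1 N)
  have hm : ((S ∩ ((Φ N) : Set (Fin d → ℤ))).ncard : ℝ) / (Φ N).card < ε / (2 * C') := by
    have := hN
    rwa [Real.norm_eq_abs, abs_of_nonneg (by positivity)] at this
  have hsplit : (∑ n ∈ Φ N, ‖lam n‖) ≤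
      ((Φ N).filter (· ∈ S)).card * C' + (Φ N).card * (ε/2) := by
    rw [← Finset.sum_filter_add_sum_filter_not (Φ N) (· ∈ S)]
    gcongr with n hn n hn
    · calc (∑ n ∈ (Φ N).filter (· ∈ S), ‖lam n‖)
          ≤ ∑ _n ∈ (Φ N).filter (· ∈ S), C' := Finset.sum_le_sum fun n _ => hC'le n
        _ = ((Φ N).filter (· ∈ S)).card * C' := by rw [Finset.sum_const, nsmul_eq_mul]
    · calc (∑ n ∈ (Φ N).filter (· ∉ S), ‖lam n‖)
          ≤ ∑ _n ∈ (Φ N).filter (· ∉ S), (ε/2) := by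
            refine Finset.sum_le_sum fun n hn => ?_
            have := (Finset.mem_filter.1 hn).2
            simpa [S, not_le] using le_of_lt (not_le.1 this)
        _ = ((Φ N).filter (· ∉ S)).card * (ε/2) := by rw [Finset.sum_const, nsmul_eq_mul]
        _ ≤ (Φ N).card * (ε/2) := by
            gcongr
            exact Finset.filter_subset _ _
  have heq : ((S ∩ ((Φ N) : Set (Fin d → ℤ))).ncard : ℝ) = ((Φ N).filter (· ∈ S)).card := by
    exact_mod_cast congrArg Nat.cast (ncard_inter_eq S (Φ N))
  rw [heq] at hm
  have hnn : (0:ℝ) ≤ ∑ n ∈ Φ N, ‖lam n‖ :=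
    Finset.sum_nonneg fun n _ => norm_nonneg _
  rw [Real.norm_eq_abs, abs_of_nonneg (by positivity)]
  rw [div_lt_iff₀ hcard]
  have h2 : (((Φ N).filter (· ∈ S)).card : ℝ) < ε / (2 * C') * (Φ N).card := by
    rwa [div_lt_iff₀ hcard] at hm
  calc (∑ n ∈ Φ N, ‖lam n‖)
      ≤ ((Φ N).filter (· ∈ S)).card * C' + (Φ N).card * (ε/2) := hsplit
    _ < (ε / (2 * C') * (Φ N).card) * C' + (Φ N).card * (ε/2) := by gcongr
    _ = ε * (Φ N).card := by field_simp; ring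


open MeasureTheory in
/-- Let `(Ω, ν)` be a measure space and `ω ↦ λ_ω` an integrable mapping from `Ω` to the set
of null-sequences in `l∞(ℤ^d)` (measurable, with `∫ ‖λ_ω‖ dν < ∞`, each `λ_ω` a
null-sequence). Then the sequence `λ(n) = ∫_Ω λ_ω(n) dν(ω)` is a null-sequence. -/
theorem integral_of_nullsequences_is_nullseq
    (d : ℕ) {Ω : Type*} [MeasurableSpace Ω] (ν : Measure Ω)
    (Λ : Ω → (Fin d → ℤ) → ℂ)
    (hmeas : ∀ n : Fin d → ℤ, Measurable fun ω => Λ ω n)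
    (hnull : ∀ ω, IsNullSeq d (Λ ω))
    (hint : Integrable (fun ω => ⨆ n : Fin d → ℤ, ‖Λ ω n‖) ν) :
    IsNullSeq d fun n => ∫ ω, Λ ω n ∂ν := by
  classical
  set F : Ω → ℝ := fun ω => ⨆ n : Fin d → ℤ, ‖Λ ω n‖ with hF
  have hFle : ∀ ω n, ‖Λ ω n‖ ≤ F ω := by
    intro ω n
    obtain ⟨C, hC⟩ := (hnull ω).1
    exact le_ciSup (⟨C, by rintro x ⟨m, rfl⟩; exact hC m⟩ : BddAbove _) n
  have hFnn : ∀ ω, 0 ≤ F ω := fun ω =>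
    le_trans (norm_nonneg _) (hFle ω 0)
  have habs : ∀ n, (fun ω => ‖Λ ω n‖) = fun ω => ‖Λ ω n‖ := by
    intro n; rfl
  have hintn : ∀ n, Integrable (fun ω => ‖Λ ω n‖) ν := by
    intro n
    refine hint.mono ?_ (ae_of_all _ fun ω => ?_)
    · rw [habs n]; exact (hmeas n).norm.aestronglyMeasurable
    · rw [Real.norm_eq_abs, abs_of_nonneg (norm_nonneg _)]
      exact (hFle ω n).trans (le_abs_self _)
  have hlamle : ∀ n, ‖∫ ω, Λ ω n ∂ν‖ ≤ ∫ ω, ‖Λ ω n‖ ∂ν := by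
    intro n
    exact norm_integral_le_integral_norm _
  constructor
  · refine ⟨∫ ω, F ω ∂ν, fun n => (hlamle n).trans ?_⟩
    exact integral_mono (hintn n) hint fun ω => hFle ω n
  · intro ε hε Φ hΦ
    set A : ℕ → Ω → ℝ := fun N ω => (∑ n ∈ Φ N, ‖Λ ω n‖) / (Φ N).card with hA
    have hcard : ∀ N, (0:ℝ) < (Φ N).card := fun N => by
      exact_mod_cast Finset.card_pos.2 (hΦ.1 N)
    have hB : Tendsto (fun N => ∫ ω, A N ω ∂ν) atTop (𝓝 0) := by
      have := tendsto_integral_of_dominated_convergence (μ := ν) (F := A)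
        (f := fun _ => (0:ℝ)) F
        (fun N => ((Finset.measurable_sum (Φ N) (fun n _ =>
            by simpa using (hmeas n).norm)).div_const _).aestronglyMeasurable)
        hint
        (fun N => ae_of_all _ fun ω => ?_)
        (ae_of_all _ fun ω => cesaro (hnull ω) hΦ)
      · simpa using this
      · have h1 : A N ω ≤ F ω := by
          rw [hA]
          rw [div_le_iff₀ (hcard N)]
          calc (∑ n ∈ Φ N, ‖Λ ω n‖) ≤ ∑ _n ∈ Φ N, F ω :=
              Finset.sum_le_sum fun n _ => hFle ω n
            _ = (Φ N).card * F ω := by rw [Finset.sum_const, nsmul_eq_mul]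
            _ = F ω * (Φ N).card := mul_comm _ _
        have h0 : 0 ≤ A N ω := by
          rw [hA]
          positivity
        rw [Real.norm_eq_abs, abs_of_nonneg h0]
        exact h1
    set S : Set (Fin d → ℤ) := {n | ε ≤ ‖∫ ω, Λ ω n ∂ν‖} with hS
    have hDle : ∀ N, ((S ∩ ((Φ N) : Set (Fin d → ℤ))).ncard : ℝ) / (Φ N).card
        ≤ ε⁻¹ * ∫ ω, A N ω ∂ν := by
      intro N
      have hmS : ((S ∩ ((Φ N) : Set (Fin d → ℤ))).ncard : ℝ)
          = ((Φ N).filter (· ∈ S)).card := by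
        exact_mod_cast congrArg Nat.cast (ncard_inter_eq S (Φ N))
      have hstep1 : ε * ((Φ N).filter (· ∈ S)).card
          ≤ ∑ n ∈ Φ N, ‖∫ ω, Λ ω n ∂ν‖ := by
        calc ε * ((Φ N).filter (· ∈ S)).card
            = ∑ _n ∈ (Φ N).filter (· ∈ S), ε := by rw [Finset.sum_const, nsmul_eq_mul]; ring
          _ ≤ ∑ n ∈ (Φ N).filter (· ∈ S), ‖∫ ω, Λ ω n ∂ν‖ :=
              Finset.sum_le_sum fun n hn => (Finset.mem_filter.1 hn).2
          _ ≤ ∑ n ∈ Φ N, ‖∫ ω, Λ ω n ∂ν‖ :=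
              Finset.sum_le_sum_of_subset_of_nonneg (Finset.filter_subset _ _)
                (fun n _ _ => norm_nonneg _)
      have hstep2 : (∑ n ∈ Φ N, ‖∫ ω, Λ ω n ∂ν‖)
          ≤ ∫ ω, (∑ n ∈ Φ N, ‖Λ ω n‖) ∂ν := by
        rw [integral_finset_sum (Φ N) (fun n _ => hintn n)]
        exact Finset.sum_le_sum fun n _ => hlamle n
      have hIA : ∫ ω, A N ω ∂ν = (∫ ω, (∑ n ∈ Φ N, ‖Λ ω n‖) ∂ν) / (Φ N).card := by
        rw [hA]; exact integral_div _ _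
      rw [hmS, hIA, ← mul_div_assoc]
      gcongr
      exact (le_inv_mul_iff₀ hε).2 (hstep1.trans hstep2)
    refine squeeze_zero (fun N => by positivity) hDle ?_
    simpa using hB.const_mul ε⁻¹
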